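/- Let χ be a primitive Dirichlet character of conductor u > 1. Then the generalized Dedekind eta function η_χ is holomorphic on the upper half-plane ℍ and has no zeros on ℍ. -/

import Mathlib

open Complex Filter

noncomputable section

/-- `q = exp(2πiτ)`. -/
def qexp (z : ℂ) : ℂ := Complex.exp (2 * Real.pi * Complex.I * z)

/-- The generalized Dedekind eta function attached to a Dirichlet character `χ` mod `N`,
`η_χ(τ) = ∏_{n≥1} ∏_{a=1}^{u} (1 − ζ_u^a q^n)^{χ̄(an)}` where `u` is the conductor of `χ`,
`ζ_u = exp(2πi/u)`, and complex powers use the principal branch of the logarithm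
(Lean's `Complex.cpow`). -/
def genEta {N : ℕ} (χ : DirichletCharacter ℂ N) (z : ℂ) : ℂ :=
  ∏' n : ℕ, ∏ a ∈ Finset.Icc 1 χ.conductor,
    (1 - Complex.exp (2 * Real.pi * Complex.I * a / χ.conductor) * qexp ((n + 1 : ℕ) * z))
      ^ ((starRingEnd ℂ) (χ ((a * (n + 1) : ℕ) : ZMod N)))

/-- The logarithm of the `n`-th factor of the generalized eta product. -/
def logTerm {N : ℕ} (χ : DirichletCharacter ℂ N) (n : ℕ) (z : ℂ) : ℂ :=
  ∑ a ∈ Finset.Icc 1 χ.conductor,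
    Complex.log (1 - Complex.exp (2 * Real.pi * Complex.I * a / χ.conductor)
        * qexp ((n + 1 : ℕ) * z))
      * ((starRingEnd ℂ) (χ ((a * (n + 1) : ℕ) : ZMod N)))

lemma abs_qexp (z : ℂ) : ‖qexp z‖ = Real.exp (-(2 * Real.pi * z.im)) := by
  rw [qexp, Complex.norm_exp]
  congr 1
  simp [Complex.mul_re, Complex.mul_im]

lemma abs_zeta (a u : ℕ) :
    ‖Complex.exp (2 * Real.pi * Complex.I * a / u)‖ = 1 := by
  have h : (2 * Real.pi * Complex.I * a / u : ℂ)
      = ((2 * Real.pi * a / u : ℝ) : ℂ) * Complex.I := by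
    push_cast; ring
  rw [h, Complex.norm_exp_ofReal_mul_I]

lemma abs_qexp_le {z : ℂ} {δ : ℝ} (hδ : δ ≤ z.im) (n : ℕ) :
    ‖qexp ((n + 1 : ℕ) * z)‖ ≤ (Real.exp (-(2 * Real.pi * δ))) ^ (n + 1) := by
  rw [abs_qexp, ← Real.exp_nat_mul]
  apply Real.exp_le_exp.2
  have him : ((n + 1 : ℕ) * z : ℂ).im = (n + 1 : ℕ) * z.im := by
    simp [Complex.mul_im]
  rw [him]
  push_cast
  have h : 2 * Real.pi * ((n : ℝ) + 1) * δ ≤ 2 * Real.pi * ((n : ℝ) + 1) * z.im := by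
    apply mul_le_mul_of_nonneg_left hδ
    positivity
  linarith

lemma abs_qexp_lt_one {z : ℂ} (hz : 0 < z.im) (n : ℕ) :
    ‖qexp ((n + 1 : ℕ) * z)‖ < 1 := by
  have := abs_qexp_le (le_refl z.im) n
  have h1 : Real.exp (-(2 * Real.pi * z.im)) < 1 := by
    rw [Real.exp_lt_one_iff]
    nlinarith [Real.pi_pos]
  calc ‖qexp ((n + 1 : ℕ) * z)‖ ≤ (Real.exp (-(2 * Real.pi * z.im))) ^ (n + 1) :=
        this
    _ < 1 := pow_lt_one₀ (Real.exp_nonneg _) h1 (Nat.succ_ne_zero n)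

/-- Each base of the cpow factors is nonzero on the upper half-plane. -/
lemma base_ne_zero {z : ℂ} (hz : 0 < z.im) (u a n : ℕ) :
    (1 - Complex.exp (2 * Real.pi * Complex.I * a / u) * qexp ((n + 1 : ℕ) * z)) ≠ 0 := by
  intro h
  have hw : ‖Complex.exp (2 * Real.pi * Complex.I * a / u)
      * qexp ((n + 1 : ℕ) * z)‖ < 1 := by
    rw [norm_mul, abs_zeta, one_mul]
    exact abs_qexp_lt_one hz n
  rw [sub_eq_zero] at h
  rw [← h] at hw
  simp at hw

/-- Each base lies in the slit plane. -/
lemma base_mem_slitPlane {z : ℂ} (hz : 0 < z.im) (u a n : ℕ) :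
    (1 - Complex.exp (2 * Real.pi * Complex.I * a / u) * qexp ((n + 1 : ℕ) * z))
      ∈ Complex.slitPlane := by
  have hw : ‖-(Complex.exp (2 * Real.pi * Complex.I * a / u) * qexp ((n + 1 : ℕ) * z))‖ < 1 := by
    rw [norm_neg, norm_mul, abs_zeta, one_mul]
    exact abs_qexp_lt_one hz n
  have := Complex.mem_slitPlane_of_norm_lt_one hw
  rwa [← sub_eq_add_neg] at this

/-- The `n`-th factor of the eta product equals `exp (logTerm χ n z)` for `z` in ℍ. -/
lemma prod_eq_exp_logTerm {N : ℕ} (χ : DirichletCharacter ℂ N) {z : ℂ} (hz : 0 < z.im)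
    (n : ℕ) :
    (∏ a ∈ Finset.Icc 1 χ.conductor,
      (1 - Complex.exp (2 * Real.pi * Complex.I * a / χ.conductor) * qexp ((n + 1 : ℕ) * z))
        ^ ((starRingEnd ℂ) (χ ((a * (n + 1) : ℕ) : ZMod N))))
      = Complex.exp (logTerm χ n z) := by
  rw [logTerm, Complex.exp_sum]
  refine Finset.prod_congr rfl fun a _ => ?_
  rw [Complex.cpow_def_of_ne_zero (base_ne_zero hz χ.conductor a n)]

/-- Uniform bound for `logTerm` on `{z | δ ≤ im z}`. -/
lemma norm_logTerm_le {N : ℕ} (χ : DirichletCharacter ℂ N) {δ : ℝ} (hδ : 0 < δ)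
    {z : ℂ} (hz : δ ≤ z.im) (n : ℕ) :
    ‖logTerm χ n z‖ ≤ (χ.conductor : ℝ) *
      (((1 - Real.exp (-(2 * Real.pi * δ)))⁻¹ / 2 + 1) *
        (Real.exp (-(2 * Real.pi * δ))) ^ (n + 1)) := by
  set t : ℝ := Real.exp (-(2 * Real.pi * δ)) with ht
  have ht0 : 0 < t := Real.exp_pos _
  have ht1 : t < 1 := by
    rw [ht, Real.exp_lt_one_iff]; nlinarith [Real.pi_pos]
  have key : ∀ a ∈ Finset.Icc 1 χ.conductor,
      ‖Complex.log (1 - Complex.exp (2 * Real.pi * Complex.I * a / χ.conductor)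
          * qexp ((n + 1 : ℕ) * z))
        * ((starRingEnd ℂ) (χ ((a * (n + 1) : ℕ) : ZMod N)))‖
      ≤ ((1 - t)⁻¹ / 2 + 1) * t ^ (n + 1) := by
    intro a _
    rw [norm_mul]
    have hχ1 : ‖(starRingEnd ℂ) (χ ((a * (n + 1) : ℕ) : ZMod N))‖ ≤ 1 := by
      rw [RCLike.norm_conj]
      exact DirichletCharacter.norm_le_one χ _
    set w : ℂ := -(Complex.exp (2 * Real.pi * Complex.I * a / χ.conductor)
      * qexp ((n + 1 : ℕ) * z)) with hw
    have hwn : ‖w‖ ≤ t ^ (n + 1) := by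
      rw [hw, norm_neg, norm_mul, abs_zeta, one_mul]
      exact abs_qexp_le hz n
    have htn1 : t ^ (n + 1) ≤ t := by
      calc t ^ (n + 1) ≤ t ^ 1 := pow_le_pow_of_le_one ht0.le ht1.le (by omega)
        _ = t := pow_one t
    have hw1 : ‖w‖ < 1 := lt_of_le_of_lt (hwn.trans htn1) ht1
    have hlog : ‖Complex.log (1 + w)‖ ≤ ‖w‖ ^ 2 * (1 - ‖w‖)⁻¹ / 2 + ‖w‖ :=
      Complex.norm_log_one_add_le hw1
    have heq : (1 : ℂ) - Complex.exp (2 * Real.pi * Complex.I * a / χ.conductor)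
        * qexp ((n + 1 : ℕ) * z) = 1 + w := by rw [hw]; ring
    rw [heq]
    have hb1 : ‖w‖ ^ 2 * (1 - ‖w‖)⁻¹ / 2 ≤ ‖w‖ * (1 - t)⁻¹ / 2 := by
      have h1 : ‖w‖ ^ 2 ≤ ‖w‖ := by nlinarith [norm_nonneg w]
      have h2 : (1 - ‖w‖)⁻¹ ≤ (1 - t)⁻¹ := by
        apply inv_anti₀ (by linarith)
        have := hwn.trans htn1; linarith
      have h3 : (0 : ℝ) ≤ (1 - ‖w‖)⁻¹ := by
        apply inv_nonneg.2; linarith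
      calc ‖w‖ ^ 2 * (1 - ‖w‖)⁻¹ / 2 ≤ ‖w‖ * (1 - ‖w‖)⁻¹ / 2 := by
            apply div_le_div_of_nonneg_right _ (by norm_num)
            exact mul_le_mul_of_nonneg_right h1 h3
        _ ≤ ‖w‖ * (1 - t)⁻¹ / 2 := by
            apply div_le_div_of_nonneg_right _ (by norm_num)
            exact mul_le_mul_of_nonneg_left h2 (norm_nonneg w)
    calc ‖Complex.log (1 + w)‖ * ‖(starRingEnd ℂ) (χ ((a * (n + 1) : ℕ) : ZMod N))‖
        ≤ ‖Complex.log (1 + w)‖ * 1 :=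
          mul_le_mul_of_nonneg_left hχ1 (norm_nonneg _)
      _ = ‖Complex.log (1 + w)‖ := mul_one _
      _ ≤ ‖w‖ ^ 2 * (1 - ‖w‖)⁻¹ / 2 + ‖w‖ := hlog
      _ ≤ ‖w‖ * (1 - t)⁻¹ / 2 + ‖w‖ := by linarith
      _ = ‖w‖ * ((1 - t)⁻¹ / 2 + 1) := by ring
      _ ≤ t ^ (n + 1) * ((1 - t)⁻¹ / 2 + 1) := by
          apply mul_le_mul_of_nonneg_right hwn
          have : (0 : ℝ) ≤ (1 - t)⁻¹ := by apply inv_nonneg.2; linarith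
          linarith
      _ = ((1 - t)⁻¹ / 2 + 1) * t ^ (n + 1) := by ring
  calc ‖logTerm χ n z‖ ≤ ∑ a ∈ Finset.Icc 1 χ.conductor,
        ‖Complex.log (1 - Complex.exp (2 * Real.pi * Complex.I * a / χ.conductor)
            * qexp ((n + 1 : ℕ) * z))
          * ((starRingEnd ℂ) (χ ((a * (n + 1) : ℕ) : ZMod N)))‖ :=
        norm_sum_le _ _
    _ ≤ ∑ _a ∈ Finset.Icc 1 χ.conductor, ((1 - t)⁻¹ / 2 + 1) * t ^ (n + 1) :=
        Finset.sum_le_sum key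
    _ = (Finset.Icc 1 χ.conductor).card * (((1 - t)⁻¹ / 2 + 1) * t ^ (n + 1)) := by
        rw [Finset.sum_const, nsmul_eq_mul]
    _ ≤ (χ.conductor : ℝ) * (((1 - t)⁻¹ / 2 + 1) * t ^ (n + 1)) := by
        have hcard : (Finset.Icc 1 χ.conductor).card ≤ χ.conductor := by
          rw [Nat.card_Icc]; omega
        have hpos : (0 : ℝ) ≤ ((1 - t)⁻¹ / 2 + 1) * t ^ (n + 1) := by
          have : (0 : ℝ) ≤ (1 - t)⁻¹ := by apply inv_nonneg.2; linarith
          positivity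
        exact mul_le_mul_of_nonneg_right (by exact_mod_cast hcard) hpos

/-- The bounding sequence is summable. -/
lemma summable_bound (c : ℕ) {δ : ℝ} (hδ : 0 < δ) :
    Summable (fun n : ℕ => (c : ℝ) *
      (((1 - Real.exp (-(2 * Real.pi * δ)))⁻¹ / 2 + 1) *
        (Real.exp (-(2 * Real.pi * δ))) ^ (n + 1))) := by
  set t : ℝ := Real.exp (-(2 * Real.pi * δ))
  have ht0 : 0 ≤ t := (Real.exp_pos _).le
  have ht1 : t < 1 := by
    rw [Real.exp_lt_one_iff]; nlinarith [Real.pi_pos]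
  have h : Summable (fun n : ℕ => t ^ (n + 1)) := by
    have := summable_geometric_of_lt_one ht0 ht1
    simpa [pow_succ, mul_comm] using this.mul_right t
  exact ((h.mul_left _).mul_left _)

lemma summable_logTerm {N : ℕ} (χ : DirichletCharacter ℂ N) {z : ℂ} (hz : 0 < z.im) :
    Summable (fun n => logTerm χ n z) := by
  apply Summable.of_norm
  apply Summable.of_nonneg_of_le (fun n => norm_nonneg _)
    (fun n => norm_logTerm_le χ hz (le_refl z.im) n)
  exact summable_bound χ.conductor hz

/-- Key identity: on ℍ, `genEta χ z = exp (∑' n, logTerm χ n z)`. -/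
lemma genEta_eq_exp {N : ℕ} (χ : DirichletCharacter ℂ N) {z : ℂ} (hz : 0 < z.im) :
    genEta χ z = Complex.exp (∑' n, logTerm χ n z) := by
  rw [genEta]
  have h1 : ∀ n : ℕ, (∏ a ∈ Finset.Icc 1 χ.conductor,
      (1 - Complex.exp (2 * Real.pi * Complex.I * a / χ.conductor) * qexp ((n + 1 : ℕ) * z))
        ^ ((starRingEnd ℂ) (χ ((a * (n + 1) : ℕ) : ZMod N))))
      = Complex.exp (logTerm χ n z) := fun n => prod_eq_exp_logTerm χ hz n
  rw [tprod_congr h1]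
  have hs : HasSum (fun n => logTerm χ n z) (∑' n, logTerm χ n z) :=
    (summable_logTerm χ hz).hasSum
  exact hs.cexp.tprod_eq

/-- Differentiability of each `logTerm` on `{z | δ < im z}`. -/
lemma differentiableOn_logTerm {N : ℕ} (χ : DirichletCharacter ℂ N) (n : ℕ) :
    DifferentiableOn ℂ (fun z => logTerm χ n z) {z : ℂ | 0 < z.im} := by
  intro z hz
  apply DifferentiableAt.differentiableWithinAt
  apply DifferentiableAt.fun_sum
  intro a _
  apply DifferentiableAt.mul_const
  have hinner : DifferentiableAt ℂ
      (fun w : ℂ => 1 - Complex.exp (2 * Real.pi * Complex.I * a / χ.conductor)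
        * qexp ((n + 1 : ℕ) * w)) z := by
    apply DifferentiableAt.const_sub
    apply DifferentiableAt.const_mul
    unfold qexp
    apply DifferentiableAt.cexp
    fun_prop
  exact (Complex.differentiableAt_log (base_mem_slitPlane hz χ.conductor a n)).comp z hinner

/-- for a primitive Dirichlet character `χ` of conductor `u > 1`, the generalized
Dedekind eta function `η_χ` is holomorphic on the upper half-plane and has no zeros there. -/
theorem genEta_holomorphic_and_nonvanishing {u : ℕ} (hu : 1 < u)
    (χ : DirichletCharacter ℂ u) (hχ : χ.IsPrimitive) :
    DifferentiableOn ℂ (genEta χ) {z : ℂ | 0 < z.im} ∧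
      ∀ z : ℂ, 0 < z.im → genEta χ z ≠ 0 := by
  constructor
  · intro z₀ hz₀
    simp only [Set.mem_setOf_eq] at hz₀
    set δ : ℝ := z₀.im / 2 with hδdef
    have hδ : 0 < δ := by positivity
    set U : Set ℂ := {z : ℂ | δ < z.im} with hU
    have hUopen : IsOpen U := isOpen_lt continuous_const Complex.continuous_im
    have hz₀U : z₀ ∈ U := by simp only [hU, Set.mem_setOf_eq]; linarith
    have hUsub : U ⊆ {z : ℂ | 0 < z.im} := fun z hz => hδ.trans hz
    -- The sum of logTerms is differentiable on U.
    have hF : DifferentiableOn ℂ (fun w : ℂ => ∑' n : ℕ, logTerm χ n w) U := by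
      apply differentiableOn_tsum_of_summable_norm (summable_bound χ.conductor hδ)
      · exact fun n => (differentiableOn_logTerm χ n).mono hUsub
      · exact hUopen
      · intro n w hw
        exact norm_logTerm_le χ hδ (le_of_lt hw) n
    have hEF : DifferentiableOn ℂ (fun w : ℂ => Complex.exp (∑' n : ℕ, logTerm χ n w)) U :=
      fun w hw => ((hF w hw).differentiableAt (hUopen.mem_nhds hw)).cexp.differentiableWithinAt
    have hDA : DifferentiableAt ℂ (fun w : ℂ => Complex.exp (∑' n : ℕ, logTerm χ n w)) z₀ :=
      (hEF z₀ hz₀U).differentiableAt (hUopen.mem_nhds hz₀U)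
    have heq : genEta χ =ᶠ[nhds z₀] fun w : ℂ => Complex.exp (∑' n : ℕ, logTerm χ n w) := by
      filter_upwards [hUopen.mem_nhds hz₀U] with w hw
      exact genEta_eq_exp χ (hUsub hw)
    exact (heq.differentiableAt_iff.2 hDA).differentiableWithinAt
  · intro z hz
    rw [genEta_eq_exp χ hz]
    exact Complex.exp_ne_zero _
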